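/- Let K, L ≥ 2 be integers and let s ∈ (0,1] be a common offer made by all K proposers. Then the unique evolutionarily stable strategy of the responder game is the uniform strategy p* with p*_i = 1/K for all i ∈ {1,…,K}. -/

import Mathlib

/-- `W_L(x) = (1 - (1-x)^L)/(L·x)` for `x ∈ (0,1]`, with `W_L(0) = 1`. -/
noncomputable def WL (L : ℕ) (x : ℝ) : ℝ :=
  if x = 0 then 1 else (1 - (1-x)^L) / ((L:ℝ) * x)

/-- The simplex of mixed strategies over `K` proposers. -/
def simplex (K : ℕ) : Set (Fin K → ℝ) :=
  {p | (∀ i, 0 ≤ p i) ∧ ∑ i, p i = 1}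

/-- Expected payoff of a focal responder playing `p` when each of the other
`L-1` responders plays `q`, given offers `s`. -/
noncomputable def payoff (K L : ℕ) (s p q : Fin K → ℝ) : ℝ :=
  ∑ i, s i * p i * WL L (q i)

/-- `pstar` is an evolutionarily stable strategy of the symmetric responder game. -/
def IsESS (K L : ℕ) (s pstar : Fin K → ℝ) : Prop :=
  pstar ∈ simplex K ∧ ∀ p ∈ simplex K, p ≠ pstar →
    payoff K L s p pstar < payoff K L s pstar pstar ∨
    (payoff K L s p pstar = payoff K L s pstar pstar ∧
      payoff K L s p p < payoff K L s pstar p)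

lemma WL_eq (L : ℕ) (hL : 1 ≤ L) (x : ℝ) :
    WL L x = (∑ j ∈ Finset.range L, (1-x)^j) / L := by
  have hL0 : (L : ℝ) ≠ 0 := by positivity
  unfold WL
  split_ifs with h
  · subst h; simp [hL0]
  · have hg : (∑ j ∈ Finset.range L, (1-x)^j) * ((1-x) - 1) = (1-x)^L - 1 :=
      geom_sum_mul (1-x) L
    have hg' : x * (∑ j ∈ Finset.range L, (1-x)^j) = 1 - (1-x)^L := by
      nlinarith [hg]
    rw [← hg']
    field_simp

lemma WL_anti (L : ℕ) (hL : 2 ≤ L) : StrictAntiOn (WL L) (Set.Icc (0:ℝ) 1) := by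
  intro x hx y hy hxy
  rw [WL_eq L (by omega), WL_eq L (by omega)]
  have hL0 : (0:ℝ) < L := by positivity
  apply div_lt_div_of_pos_right ?_ hL0
  apply Finset.sum_lt_sum
  · intro j _
    exact pow_le_pow_left₀ (by linarith [hy.2]) (by linarith) j
  · refine ⟨1, Finset.mem_range.mpr (by omega), ?_⟩
    simpa using (by linarith : 1 - y < 1 - x)

lemma pair_nonpos {f : ℝ → ℝ} (hf : StrictAntiOn f (Set.Icc (0:ℝ) 1))
    {a b : ℝ} (ha : a ∈ Set.Icc (0:ℝ) 1) (hb : b ∈ Set.Icc (0:ℝ) 1) :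
    (a - b) * (f a - f b) ≤ 0 ∧ (a ≠ b → (a - b) * (f a - f b) < 0) := by
  rcases lt_trichotomy a b with h | h | h
  · have := hf ha hb h
    constructor
    · nlinarith
    · intro _; nlinarith
  · subst h; simp
  · have := hf hb ha h
    constructor
    · nlinarith
    · intro _; nlinarith

lemma mem_Icc_of_simplex {K : ℕ} {p : Fin K → ℝ} (hp : p ∈ simplex K) (i : Fin K) :
    p i ∈ Set.Icc (0:ℝ) 1 := by
  refine ⟨hp.1 i, ?_⟩
  calc p i ≤ ∑ j, p j := Finset.single_le_sum (fun j _ => hp.1 j) (Finset.mem_univ i)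
    _ = 1 := hp.2

lemma key (K L : ℕ) (hK : 2 ≤ K) (hL : 2 ≤ L) (p : Fin K → ℝ)
    (hp : p ∈ simplex K) (hne : p ≠ fun _ => 1/(K:ℝ)) :
    ∑ i, (p i - 1/(K:ℝ)) * WL L (p i) < 0 := by
  set c : ℝ := 1/(K:ℝ) with hc
  have hK0 : (0:ℝ) < K := by positivity
  have hcIcc : c ∈ Set.Icc (0:ℝ) 1 := by
    constructor
    · positivity
    · rw [hc, div_le_one hK0]; exact_mod_cast le_trans (by norm_num) hK
  have hanti := WL_anti L hL
  have hsum0 : ∑ i : Fin K, (p i - c) = 0 := by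
    rw [Finset.sum_sub_distrib, hp.2, Finset.sum_const, Finset.card_univ, Fintype.card_fin,
      nsmul_eq_mul, hc, mul_one_div, div_self (ne_of_gt hK0), sub_self]
  have hrw : ∑ i, (p i - c) * WL L (p i)
      = ∑ i, (p i - c) * (WL L (p i) - WL L c) := by
    rw [← sub_eq_zero, ← Finset.sum_sub_distrib]
    have : ∀ i : Fin K, (p i - c) * WL L (p i) - (p i - c) * (WL L (p i) - WL L c)
        = (p i - c) * WL L c := by intro i; ring
    rw [Finset.sum_congr rfl (fun i _ => this i), ← Finset.sum_mul, hsum0, zero_mul]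
  rw [hrw]
  obtain ⟨i0, hi0⟩ := Function.ne_iff.mp hne
  have hlt : ∑ i, (p i - c) * (WL L (p i) - WL L c) < ∑ _i : Fin K, (0:ℝ) := by
    apply Finset.sum_lt_sum
    · intro j _
      exact (pair_nonpos hanti (mem_Icc_of_simplex hp j) hcIcc).1
    · exact ⟨i0, Finset.mem_univ i0,
        (pair_nonpos hanti (mem_Icc_of_simplex hp i0) hcIcc).2 hi0⟩
  simpa using hlt

lemma payoff_uniform_right (K L : ℕ) (s : ℝ) (p : Fin K → ℝ) (hp : p ∈ simplex K) :
    payoff K L (fun _ => s) p (fun _ => 1/(K:ℝ)) = s * WL L (1/(K:ℝ)) := by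
  unfold payoff
  have : ∀ i : Fin K, s * p i * WL L (1/(K:ℝ)) = (s * WL L (1/(K:ℝ))) * p i := by
    intro i; ring
  rw [Finset.sum_congr rfl (fun i _ => this i), ← Finset.mul_sum, hp.2, mul_one]

theorem stmt14 (K L : ℕ) (hK : 2 ≤ K) (hL : 2 ≤ L)
    (s : ℝ) (hs : s ∈ Set.Ioc (0:ℝ) 1) :
    ∀ pstar : Fin K → ℝ,
      IsESS K L (fun _ => s) pstar ↔ pstar = fun _ => 1 / (K:ℝ) := by
  intro pstar
  have hK0 : (0:ℝ) < K := by positivity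
  have huni : (fun _ : Fin K => 1/(K:ℝ)) ∈ simplex K := by
    constructor
    · intro i; positivity
    · rw [Finset.sum_const, Finset.card_univ, Fintype.card_fin]; rw [nsmul_eq_mul]; field_simp
  constructor
  · intro hESS
    by_contra hne
    have hps := hESS.1
    rcases hESS.2 _ huni (fun h => hne h.symm) with h1 | h2
    · -- payoff u p* < payoff p* p* contradicts key lemma
      have hkey := key K L hK hL pstar hps hne
      have hkey' : ∑ i, s * pstar i * WL L (pstar i)
          < ∑ i, s * (1/(K:ℝ)) * WL L (pstar i) := by
        have : ∑ i, (s * pstar i * WL L (pstar i) - s * (1/(K:ℝ)) * WL L (pstar i))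
            = s * ∑ i, (pstar i - 1/(K:ℝ)) * WL L (pstar i) := by
          rw [Finset.mul_sum]; apply Finset.sum_congr rfl; intro i _; ring
        have hneg : ∑ i, (s * pstar i * WL L (pstar i)
            - s * (1/(K:ℝ)) * WL L (pstar i)) < 0 := by
          rw [this]; exact mul_neg_of_pos_of_neg hs.1 hkey
        rw [Finset.sum_sub_distrib] at hneg
        linarith
      exact absurd h1 (by unfold payoff; exact not_lt.mpr (le_of_lt hkey'))
    · have := h2.2
      rw [payoff_uniform_right K L s _ huni, payoff_uniform_right K L s _ hps] at this
      exact lt_irrefl _ this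
  · intro hps
    subst hps
    refine ⟨huni, ?_⟩
    intro p hp hne
    right
    constructor
    · rw [payoff_uniform_right K L s _ hp, payoff_uniform_right K L s _ huni]
    · have hkey := key K L hK hL p hp hne
      unfold payoff
      have : ∑ i, (s * p i * WL L (p i) - s * (1/(K:ℝ)) * WL L (p i))
          = s * ∑ i, (p i - 1/(K:ℝ)) * WL L (p i) := by
        rw [Finset.mul_sum]; apply Finset.sum_congr rfl; intro i _; ring
      have hneg : ∑ i, (s * p i * WL L (p i) - s * (1/(K:ℝ)) * WL L (p i)) < 0 := by
        rw [this]; exact mul_neg_of_pos_of_neg hs.1 hkey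
      rw [Finset.sum_sub_distrib] at hneg
      linarith
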